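/- Let (E,F) be a p-energy form on (X,m) satisfying the Lipschitz contraction property, let δ, M > 0, and let u,v ∈ F be nonnegative with (u+v)(x) ≥ δ for all x in {u ≠ 0} and u ≤ M. Then there exists C = C(p,δ,M) ∈ (0,∞) such that u/(u+v) ∈ F and E(u/(u+v)) ≤ C(E(u) + E(v)), where 0/0 is interpreted as 0. -/

import Mathlib

open MeasureTheory Set

set_option maxHeartbeats 1000000 in
theorem stmt4
    {X : Type*} [MeasurableSpace X] (m : Measure X) (p : ℝ) (hp : 1 < p)
    (F : Set (X → ℝ)) (E : (X → ℝ) → ℝ)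
    (hF_meas : ∀ u ∈ F, Measurable u)
    (hF_add : ∀ u ∈ F, ∀ v ∈ F, u + v ∈ F)
    (hF_smul : ∀ u ∈ F, ∀ c : ℝ, c • u ∈ F)
    (hE_nonneg : ∀ u, 0 ≤ E u)
    (hE_tri : ∀ u ∈ F, ∀ v ∈ F, E (u + v) ^ (1 / p) ≤ E u ^ (1 / p) + E v ^ (1 / p))
    (hE_smul : ∀ u ∈ F, ∀ c : ℝ, E (c • u) = |c| ^ p * E u)
    (hLip : ∀ u ∈ F, ∀ φ : ℝ → ℝ, LipschitzWith 1 φ → (φ ∘ u ∈ F ∧ E (φ ∘ u) ≤ E u))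
    (δ M : ℝ) (hδ : 0 < δ) (hM : 0 < M)
    (u : X → ℝ) (hu : u ∈ F) (v : X → ℝ) (hv : v ∈ F)
    (hu0 : ∀ x, 0 ≤ u x) (hv0 : ∀ x, 0 ≤ v x)
    (huM : ∀ x, u x ≤ M)
    (hlow : ∀ x, u x ≠ 0 → δ ≤ u x + v x) :
    ∃ C : ℝ, 0 < C ∧ (fun x => u x / (u x + v x)) ∈ F ∧
      E (fun x => u x / (u x + v x)) ≤ C * (E u + E v) := by
  have hp0 : (0:ℝ) < p := by linarith
  have hpne : p ≠ 0 := ne_of_gt hp0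
  have ht0 : (0:ℝ) < 1 / p := by positivity
  -- key lemma: Lipschitz contraction with general Lipschitz constant
  have key : ∀ w ∈ F, ∀ φ : ℝ → ℝ, ∀ L : ℝ, 0 < L →
      (∀ s t : ℝ, |φ s - φ t| ≤ L * |s - t|) →
      φ ∘ w ∈ F ∧ E (φ ∘ w) ≤ L ^ p * E w := by
    intro w hw φ L hL hφ
    set ψ : ℝ → ℝ := fun t => L⁻¹ * φ t with hψdef
    have hψlip : LipschitzWith 1 ψ := by
      apply LipschitzWith.of_dist_le_mul
      intro x y
      simp only [Real.dist_eq, hψdef, NNReal.coe_one, one_mul]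
      rw [← mul_sub, abs_mul, abs_inv, abs_of_pos hL]
      calc L⁻¹ * |φ x - φ y| ≤ L⁻¹ * (L * |x - y|) :=
            mul_le_mul_of_nonneg_left (hφ x y) (by positivity)
        _ = |x - y| := by field_simp
    obtain ⟨h1, h2⟩ := hLip w hw ψ hψlip
    have heq : φ ∘ w = L • (ψ ∘ w) := by
      funext x
      simp only [Function.comp, hψdef, Pi.smul_apply, smul_eq_mul]
      field_simp
    refine ⟨heq ▸ hF_smul _ h1 L, ?_⟩
    rw [heq, hE_smul _ h1 L, abs_of_pos hL]
    exact mul_le_mul_of_nonneg_left h2 (by positivity)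
  -- setup
  set w : X → ℝ := u + v with hwdef
  have hwF : w ∈ F := hF_add u hu v hv
  set K : ℝ := M + δ⁻¹ with hKdef
  have hK0 : 0 < K := by positivity
  set L1 : ℝ := δ⁻¹ * δ⁻¹ with hL1def
  have hL10 : 0 < L1 := by positivity
  -- φ1 : t ↦ (max t δ)⁻¹, L1-Lipschitz
  set φ1 : ℝ → ℝ := fun t => (max t δ)⁻¹ with hφ1def
  have hφ1lip : ∀ s t : ℝ, |φ1 s - φ1 t| ≤ L1 * |s - t| := by
    intro s t
    have hs : (0:ℝ) < max s δ := lt_of_lt_of_le hδ (le_max_right _ _)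
    have htt : (0:ℝ) < max t δ := lt_of_lt_of_le hδ (le_max_right _ _)
    have h1 : φ1 s - φ1 t = (max t δ - max s δ) / (max s δ * max t δ) := by
      simp only [hφ1def]; rw [inv_sub_inv hs.ne' htt.ne']
    rw [h1, abs_div]
    have hmax : |max t δ - max s δ| ≤ |s - t| := by
      rw [abs_sub_comm]
      simpa using abs_max_sub_max_le_abs s t δ
    have hden : |max s δ * max t δ| = max s δ * max t δ := abs_of_pos (by positivity)
    rw [hden]
    have hden2 : δ * δ ≤ max s δ * max t δ :=
      mul_le_mul (le_max_right _ _) (le_max_right _ _) hδ.le (by positivity)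
    have step : |max t δ - max s δ| / (max s δ * max t δ) ≤ |s - t| / (δ * δ) :=
      div_le_div₀ (abs_nonneg _) hmax (by positivity) hden2
    have hfin : |s - t| / (δ * δ) = L1 * |s - t| := by
      rw [hL1def, div_eq_mul_inv, mul_inv]; ring
    linarith [step]
  -- φ2 : t ↦ (min |t| K)^2, 2K-Lipschitz
  set φ2 : ℝ → ℝ := fun t => (min |t| K) ^ 2 with hφ2def
  have hφ2lip : ∀ s t : ℝ, |φ2 s - φ2 t| ≤ (2 * K) * |s - t| := by
    intro s t
    set a := min |s| K with ha
    set b := min |t| K with hb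
    have ha0 : 0 ≤ a := le_min (abs_nonneg _) hK0.le
    have hb0 : 0 ≤ b := le_min (abs_nonneg _) hK0.le
    have haK : a ≤ K := min_le_right _ _
    have hbK : b ≤ K := min_le_right _ _
    have hab : |a - b| ≤ |s - t| := by
      have h1 := abs_min_sub_min_le_max |s| K |t| K
      simp only [sub_self, abs_zero] at h1
      rw [max_eq_left (abs_nonneg _)] at h1
      exact le_trans h1 (abs_abs_sub_abs_le_abs_sub s t)
    have heq2 : φ2 s - φ2 t = (a - b) * (a + b) := by rw [hφ2def]; ring
    rw [heq2, abs_mul]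
    have h2 : |a + b| ≤ 2 * K := by
      rw [abs_of_nonneg (by linarith)]; linarith
    calc |a - b| * |a + b| ≤ |s - t| * (2 * K) :=
          mul_le_mul hab h2 (abs_nonneg _) (abs_nonneg _)
      _ = (2 * K) * |s - t| := by ring
  -- build the function
  obtain ⟨hhF, hhE⟩ := key w hwF φ1 L1 hL10 hφ1lip
  set h : X → ℝ := φ1 ∘ w with hhdef
  have hAF : u + h ∈ F := hF_add u hu h hhF
  have hnhF : (-1 : ℝ) • h ∈ F := hF_smul h hhF (-1)
  have hBF : u + (-1 : ℝ) • h ∈ F := hF_add u hu _ hnhF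
  obtain ⟨hsqAF, hsqAE⟩ := key (u + h) hAF φ2 (2 * K) (by positivity) hφ2lip
  obtain ⟨hsqBF, hsqBE⟩ := key (u + (-1 : ℝ) • h) hBF φ2 (2 * K) (by positivity) hφ2lip
  have hnsqBF : (-1 : ℝ) • (φ2 ∘ (u + (-1 : ℝ) • h)) ∈ F := hF_smul _ hsqBF (-1)
  set D : X → ℝ := φ2 ∘ (u + h) + (-1 : ℝ) • (φ2 ∘ (u + (-1 : ℝ) • h)) with hDdef
  have hDF : D ∈ F := hF_add _ hsqAF _ hnsqBF
  have hfF : (4⁻¹ : ℝ) • D ∈ F := hF_smul D hDF 4⁻¹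
  -- pointwise identity
  have hfeq : (fun x => u x / (u x + v x)) = (4⁻¹ : ℝ) • D := by
    funext x
    simp only [hDdef, Pi.smul_apply, Pi.add_apply, smul_eq_mul, Function.comp,
      hhdef, hφ1def, hφ2def, hwdef]
    by_cases hx : u x = 0
    · rw [hx]
      simp only [zero_div, zero_add]
      simp only [neg_one_mul, abs_neg]
      ring
    · have hδx : δ ≤ u x + v x := hlow x hx
      have hux : 0 < u x := lt_of_le_of_ne (hu0 x) (Ne.symm hx)
      have hwx : 0 < u x + v x := lt_of_lt_of_le hδ hδx
      have hmax : max (u x + v x) δ = u x + v x := max_eq_left hδx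
      rw [hmax]
      set r : ℝ := (u x + v x)⁻¹ with hr
      have hr0 : 0 < r := by positivity
      have hrK : r ≤ δ⁻¹ := by
        rw [hr]
        exact inv_anti₀ hδ hδx
      have h1 : |u x + r| = u x + r := abs_of_pos (by positivity)
      have h2 : u x + r ≤ K := by
        rw [hKdef]; exact add_le_add (huM x) hrK
      have hmin1 : min |u x + r| K = u x + r := by rw [h1]; exact min_eq_left h2
      have h3 : |u x + -1 * r| ≤ K := by
        rw [abs_le]
        constructor
        · have hrK2 : r ≤ K := le_trans hrK (by rw [hKdef]; linarith)
          nlinarith [hu0 x]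
        · nlinarith [huM x, hr0]
      have hmin2 : min |u x + -1 * r| K = |u x + -1 * r| := min_eq_left h3
      rw [hmin1, hmin2, sq_abs]
      have hdr : u x / (u x + v x) = u x * r := by
        rw [hr, div_eq_mul_inv]
      rw [hdr]
      ring
  -- energy estimates
  set a : ℝ := E u ^ (1 / p) with hadef
  set b : ℝ := E v ^ (1 / p) with hbdef
  have ha0 : 0 ≤ a := Real.rpow_nonneg (hE_nonneg u) _
  have hb0 : 0 ≤ b := Real.rpow_nonneg (hE_nonneg v) _
  clear_value a b K L1
  have hLpow : ∀ L x : ℝ, 0 < L → 0 ≤ x → (L ^ p * x) ^ (1 / p) = L * x ^ (1 / p) := by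
    intro L x hL hx
    rw [Real.mul_rpow (Real.rpow_nonneg hL.le p) hx, ← Real.rpow_mul hL.le,
      mul_one_div_cancel hpne, Real.rpow_one]
  have hwE : E w ^ (1 / p) ≤ a + b := by rw [hadef, hbdef]; exact hE_tri u hu v hv
  have hhE' : E h ^ (1 / p) ≤ L1 * (a + b) := by
    calc E h ^ (1 / p) ≤ (L1 ^ p * E w) ^ (1 / p) :=
          Real.rpow_le_rpow (hE_nonneg h) hhE ht0.le
      _ = L1 * E w ^ (1 / p) := hLpow L1 (E w) hL10 (hE_nonneg w)
      _ ≤ L1 * (a + b) := mul_le_mul_of_nonneg_left hwE hL10.le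
  have hAE : E (u + h) ^ (1 / p) ≤ a + L1 * (a + b) := by
    have := hE_tri u hu h hhF
    rw [← hadef] at this
    linarith
  have hnE : E ((-1 : ℝ) • h) = E h := by
    rw [hE_smul h hhF]
    simp [Real.one_rpow]
  have hBE : E (u + (-1 : ℝ) • h) ^ (1 / p) ≤ a + L1 * (a + b) := by
    have := hE_tri u hu _ hnhF
    rw [← hadef, hnE] at this
    linarith
  have hsqA' : E (φ2 ∘ (u + h)) ^ (1 / p) ≤ 2 * K * (a + L1 * (a + b)) := by
    calc E (φ2 ∘ (u + h)) ^ (1 / p) ≤ ((2 * K) ^ p * E (u + h)) ^ (1 / p) :=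
          Real.rpow_le_rpow (hE_nonneg _) hsqAE ht0.le
      _ = 2 * K * E (u + h) ^ (1 / p) := hLpow _ _ (by linarith) (hE_nonneg _)
      _ ≤ 2 * K * (a + L1 * (a + b)) := mul_le_mul_of_nonneg_left hAE (by linarith)
  have hsqB' : E (φ2 ∘ (u + (-1 : ℝ) • h)) ^ (1 / p) ≤ 2 * K * (a + L1 * (a + b)) := by
    calc E (φ2 ∘ (u + (-1 : ℝ) • h)) ^ (1 / p)
        ≤ ((2 * K) ^ p * E (u + (-1 : ℝ) • h)) ^ (1 / p) :=
          Real.rpow_le_rpow (hE_nonneg _) hsqBE ht0.le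
      _ = 2 * K * E (u + (-1 : ℝ) • h) ^ (1 / p) := hLpow _ _ (by linarith) (hE_nonneg _)
      _ ≤ 2 * K * (a + L1 * (a + b)) := mul_le_mul_of_nonneg_left hBE (by linarith)
  have hnsqBE : E ((-1 : ℝ) • (φ2 ∘ (u + (-1 : ℝ) • h))) = E (φ2 ∘ (u + (-1 : ℝ) • h)) := by
    rw [hE_smul _ hsqBF]
    simp [Real.one_rpow]
  have hDE : E D ^ (1 / p) ≤ 4 * K * (a + L1 * (a + b)) := by
    have h4 := hE_tri _ hsqAF _ hnsqBF
    rw [hnsqBE] at h4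
    rw [hDdef]
    nlinarith [Real.rpow_nonneg (hE_nonneg (φ2 ∘ (u + h))) (1/p)]
  have hfE : E ((4⁻¹ : ℝ) • D) ^ (1 / p) ≤ K * (1 + L1) * (a + b) := by
    rw [hE_smul D hDF, abs_of_pos (by norm_num : (0:ℝ) < 4⁻¹),
      hLpow 4⁻¹ (E D) (by norm_num) (hE_nonneg D)]
    have hKb : 0 ≤ K * b := mul_nonneg hK0.le hb0
    have h5 : (4:ℝ)⁻¹ * (4 * K * (a + L1 * (a + b))) ≤ K * (1 + L1) * (a + b) := by
      nlinarith [hKb]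
    calc (4:ℝ)⁻¹ * E D ^ (1 / p) ≤ (4:ℝ)⁻¹ * (4 * K * (a + L1 * (a + b))) :=
          mul_le_mul_of_nonneg_left hDE (by norm_num)
      _ ≤ K * (1 + L1) * (a + b) := h5
  -- conclusion
  set c0 : ℝ := K * (1 + L1) with hc0def
  have hc00 : 0 < c0 := mul_pos hK0 (by linarith)
  clear_value c0
  refine ⟨(2 * c0) ^ p, Real.rpow_pos_of_pos (by linarith) p, by rw [hfeq]; exact hfF, ?_⟩
  rw [hfeq]
  have hEf0 : 0 ≤ E ((4⁻¹ : ℝ) • D) := hE_nonneg _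
  have hm0 : 0 ≤ max a b := le_max_of_le_left ha0
  have hmp : (max a b) ^ p ≤ E u + E v := by
    rcases max_cases a b with ⟨hh, _⟩ | ⟨hh, _⟩ <;> rw [hh]
    · rw [hadef, ← Real.rpow_mul (hE_nonneg u), one_div_mul_cancel hpne, Real.rpow_one]
      linarith [hE_nonneg v]
    · rw [hbdef, ← Real.rpow_mul (hE_nonneg v), one_div_mul_cancel hpne, Real.rpow_one]
      linarith [hE_nonneg u]
  calc E ((4⁻¹ : ℝ) • D) = (E ((4⁻¹ : ℝ) • D) ^ (1 / p)) ^ p := by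
        rw [← Real.rpow_mul hEf0, one_div_mul_cancel hpne, Real.rpow_one]
    _ ≤ (c0 * (a + b)) ^ p :=
        Real.rpow_le_rpow (Real.rpow_nonneg hEf0 _) hfE hp0.le
    _ ≤ ((2 * c0) * max a b) ^ p := by
        apply Real.rpow_le_rpow (mul_nonneg hc00.le (by linarith)) _ hp0.le
        nlinarith [le_max_left a b, le_max_right a b]
    _ = (2 * c0) ^ p * (max a b) ^ p := Real.mul_rpow (by linarith) hm0
    _ ≤ (2 * c0) ^ p * (E u + E v) :=
        mul_le_mul_of_nonneg_left hmp (Real.rpow_nonneg (by linarith) _)
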